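/- (Theorem 2, SNR lower bound.) Let g₁, …, g_T : Ω → ℝ^d be random vectors on a probability space with E‖gᵢ‖² < ∞, let U be a subspace of ℝ^d with orthogonal projections P onto U and P⊥ onto U⊥, and let K ⊆ {1, …, T}. Assume: (i) Bounded Noise Correlation with constant ρ ≥ 0: |E⟨P⊥ gᵢ, P⊥ gⱼ⟩| ≤ ρ √(E‖P⊥ gᵢ‖²) √(E‖P⊥ gⱼ‖²) for all i ≠ j; (ii) there is a vector μ ∈ U with ‖μ‖² ≥ σ² > 0 such that E[P gᵢ] = μ for all i ∈ K and E[P gᵢ] = 0 for all i ∉ K; (iii) the weights are indicators ωᵢ ∈ {0, 1} with ∑_{i ∈ K} ωᵢ ≥ c > 0. Then the estimator ĝ = ∑_{i=1}^T ωᵢ gᵢ satisfies E‖P ĝ‖² / E‖P⊥ ĝ‖² ≥ c² σ² / ((1 + ρ(T − 1)) ∑_{i ∉ K} ωᵢ² E‖P⊥ gᵢ‖² + δ), where δ = (1 + ρ(T − 1)) ∑_{i ∈ K} ωᵢ² E‖P⊥ gᵢ‖², provided E‖P⊥ ĝ‖² > 0. -/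

import Mathlib

open MeasureTheory Finset
open scoped RealInnerProductSpace BigOperators

/-- The orthogonal projection onto a subspace `W` of `ℝ^d`, viewed as a map `ℝ^d → ℝ^d`. -/
noncomputable def Pproj {d : ℕ} (W : Submodule ℝ (EuclideanSpace ℝ (Fin d))) :
    EuclideanSpace ℝ (Fin d) →L[ℝ] EuclideanSpace ℝ (Fin d) :=
  W.subtypeL.comp W.orthogonalProjectionOnto

lemma Pproj_norm_le {d : ℕ} (W : Submodule ℝ (EuclideanSpace ℝ (Fin d)))
    (x : EuclideanSpace ℝ (Fin d)) : ‖Pproj W x‖ ≤ ‖x‖ := by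
  have h : ‖Pproj W x‖ = ‖W.orthogonalProjectionOnto x‖ := rfl
  rw [h]
  calc ‖W.orthogonalProjectionOnto x‖ ≤ ‖W.orthogonalProjectionOnto‖ * ‖x‖ :=
        (W.orthogonalProjectionOnto).le_opNorm x
    _ ≤ 1 * ‖x‖ :=
        mul_le_mul_of_nonneg_right (Submodule.orthogonalProjectionOnto_norm_le W) (norm_nonneg x)
    _ = ‖x‖ := one_mul _

lemma norm_sq_sum_inner {d : ℕ} {ι : Type*} [Fintype ι] (v : ι → EuclideanSpace ℝ (Fin d)) :
    ‖∑ i, v i‖ ^ 2 = ∑ i, ∑ j, ⟪v i, v j⟫ := by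
  rw [← real_inner_self_eq_norm_sq, sum_inner]
  exact Finset.sum_congr rfl fun i _ => inner_sum _ _ _

/-- Jensen for squares on a probability space. -/
lemma sq_integral_le {Ω : Type*} [MeasurableSpace Ω] (μ : Measure Ω) [IsProbabilityMeasure μ]
    (h : Ω → ℝ) (hi : Integrable h μ) (hi2 : Integrable (fun x => h x ^ 2) μ) :
    (∫ x, h x ∂μ) ^ 2 ≤ ∫ x, h x ^ 2 ∂μ := by
  set m := ∫ x, h x ∂μ with hm
  have key : ∫ x, (h x - m) ^ 2 ∂μ = (∫ x, h x ^ 2 ∂μ) - m ^ 2 := by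
    have hcm : Integrable (fun x => 2 * m * h x) μ := hi.const_mul (2 * m)
    have hA : Integrable (fun x => h x ^ 2 - 2 * m * h x) μ := hi2.sub hcm
    have heq : (fun x => (h x - m) ^ 2) = fun x => (h x ^ 2 - 2 * m * h x) + m ^ 2 := by
      funext x; ring
    rw [heq, integral_add hA (integrable_const _), integral_sub hi2 hcm,
      integral_const_mul, integral_const]
    simp [← hm]
    ring
  have h0 : 0 ≤ ∫ x, (h x - m) ^ 2 ∂μ := integral_nonneg fun x => sq_nonneg _
  linarith [key ▸ h0]

/-- Theorem 2, SNR lower bound: under Bounded Noise Correlation, a common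
signal mean `μvec ∈ U` with `‖μvec‖² ≥ σ² > 0` on the knowledge-critical tokens `K`, and
indicator weights with `∑_{i ∈ K} ωᵢ ≥ c > 0`, the estimator `ĝ = ∑ᵢ ωᵢ gᵢ` satisfies
`E‖P ĝ‖² / E‖P⊥ ĝ‖² ≥ c² σ² / ((1 + ρ(T − 1)) ∑_{i ∉ K} ωᵢ² E‖P⊥ gᵢ‖² + δ)`
with `δ = (1 + ρ(T − 1)) ∑_{i ∈ K} ωᵢ² E‖P⊥ gᵢ‖²`, provided `E‖P⊥ ĝ‖² > 0`. -/
theorem stmt10 {Ω : Type*} [MeasurableSpace Ω] (μ : Measure Ω) [IsProbabilityMeasure μ]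
    {d T : ℕ} (g : Fin T → Ω → EuclideanSpace ℝ (Fin d))
    (hmeas : ∀ i, Measurable (g i))
    (hL2 : ∀ i, Integrable (fun x => ‖g i x‖ ^ 2) μ)
    (U : Submodule ℝ (EuclideanSpace ℝ (Fin d)))
    (K : Finset (Fin T))
    (ρ : ℝ) (hρ : 0 ≤ ρ)
    (hBNC : ∀ i j, i ≠ j →
      |∫ x, ⟪Pproj Uᗮ (g i x), Pproj Uᗮ (g j x)⟫ ∂μ|
        ≤ ρ * Real.sqrt (∫ x, ‖Pproj Uᗮ (g i x)‖ ^ 2 ∂μ)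
            * Real.sqrt (∫ x, ‖Pproj Uᗮ (g j x)‖ ^ 2 ∂μ))
    (μvec : EuclideanSpace ℝ (Fin d)) (hμU : μvec ∈ U)
    (σ : ℝ) (hσpos : 0 < σ ^ 2) (hμσ : σ ^ 2 ≤ ‖μvec‖ ^ 2)
    (hmeanK : ∀ i ∈ K, (∫ x, Pproj U (g i x) ∂μ) = μvec)
    (hmean0 : ∀ i ∉ K, (∫ x, Pproj U (g i x) ∂μ) = 0)
    (ω : Fin T → ℝ) (hω : ∀ i, ω i = 0 ∨ ω i = 1)
    (c : ℝ) (hc : 0 < c) (hcsum : c ≤ ∑ i ∈ K, ω i)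
    (hnoise : 0 < ∫ x, ‖Pproj Uᗮ (∑ i, ω i • g i x)‖ ^ 2 ∂μ) :
    c ^ 2 * σ ^ 2 /
        ((1 + ρ * ((T : ℝ) - 1)) * (∑ i ∈ Kᶜ, ω i ^ 2 * ∫ x, ‖Pproj Uᗮ (g i x)‖ ^ 2 ∂μ)
          + (1 + ρ * ((T : ℝ) - 1)) * (∑ i ∈ K, ω i ^ 2 * ∫ x, ‖Pproj Uᗮ (g i x)‖ ^ 2 ∂μ))
      ≤ (∫ x, ‖Pproj U (∑ i, ω i • g i x)‖ ^ 2 ∂μ)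
          / ∫ x, ‖Pproj Uᗮ (∑ i, ω i • g i x)‖ ^ 2 ∂μ := by
  -- basic facts about ω
  have hω0 : ∀ i, 0 ≤ ω i := fun i => by rcases hω i with h | h <;> simp [h]
  have hω1 : ∀ i, ω i ≤ 1 := fun i => by rcases hω i with h | h <;> simp [h]
  have hωsq : ∀ i, ω i ^ 2 = ω i := fun i => by rcases hω i with h | h <;> simp [h]
  -- measurability of projected processes
  have hmeasP : ∀ (W : Submodule ℝ (EuclideanSpace ℝ (Fin d))) i,
      Measurable (fun x => Pproj W (g i x)) :=
    fun W i => (Pproj W).continuous.measurable.comp (hmeas i)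
  -- integrability of squared norms of projections
  have hIsq : ∀ (W : Submodule ℝ (EuclideanSpace ℝ (Fin d))) i,
      Integrable (fun x => ‖Pproj W (g i x)‖ ^ 2) μ := by
    intro W i
    refine (hL2 i).mono' (((hmeasP W i).norm.pow_const 2).aestronglyMeasurable) ?_
    filter_upwards with x
    rw [Real.norm_eq_abs, abs_of_nonneg (by positivity)]
    exact pow_le_pow_left₀ (norm_nonneg _) (Pproj_norm_le W (g i x)) 2
  -- integrability of inner products of projections
  have hIinner : ∀ (W : Submodule ℝ (EuclideanSpace ℝ (Fin d))) i j,
      Integrable (fun x => ⟪Pproj W (g i x), Pproj W (g j x)⟫) μ := by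
    intro W i j
    refine (((hIsq W i).add (hIsq W j)).div_const 2).mono'
      (((hmeasP W i).inner (hmeasP W j)).aestronglyMeasurable) ?_
    filter_upwards with x
    rw [Real.norm_eq_abs]
    calc |⟪Pproj W (g i x), Pproj W (g j x)⟫|
        ≤ ‖Pproj W (g i x)‖ * ‖Pproj W (g j x)‖ := abs_real_inner_le_norm _ _
      _ ≤ (‖Pproj W (g i x)‖ ^ 2 + ‖Pproj W (g j x)‖ ^ 2) / 2 := by
          nlinarith [sq_nonneg (‖Pproj W (g i x)‖ - ‖Pproj W (g j x)‖)]
  -- pointwise expansion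
  have hpt : ∀ (W : Submodule ℝ (EuclideanSpace ℝ (Fin d))) x,
      ‖Pproj W (∑ i, ω i • g i x)‖ ^ 2
        = ∑ i, ∑ j, ω i * ω j * ⟪Pproj W (g i x), Pproj W (g j x)⟫ := by
    intro W x
    have h1 : Pproj W (∑ i, ω i • g i x) = ∑ i, ω i • Pproj W (g i x) := by
      rw [map_sum]; simp
    rw [h1, norm_sq_sum_inner]
    refine Finset.sum_congr rfl fun i _ => Finset.sum_congr rfl fun j _ => ?_
    rw [real_inner_smul_left, real_inner_smul_right]; ring
  -- expansion of the integral
  have hexp : ∀ (W : Submodule ℝ (EuclideanSpace ℝ (Fin d))),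
      (∫ x, ‖Pproj W (∑ i, ω i • g i x)‖ ^ 2 ∂μ)
        = ∑ i, ∑ j, ω i * ω j * ∫ x, ⟪Pproj W (g i x), Pproj W (g j x)⟫ ∂μ := by
    intro W
    calc (∫ x, ‖Pproj W (∑ i, ω i • g i x)‖ ^ 2 ∂μ)
        = ∫ x, ∑ i, ∑ j, ω i * ω j * ⟪Pproj W (g i x), Pproj W (g j x)⟫ ∂μ := by
          exact integral_congr_ae (Filter.Eventually.of_forall (hpt W))
      _ = ∑ i, ∑ j, ω i * ω j * ∫ x, ⟪Pproj W (g i x), Pproj W (g j x)⟫ ∂μ := by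
          rw [integral_finset_sum _ fun i _ =>
            integrable_finset_sum _ fun j _ => ((hIinner W i j).const_mul _)]
          refine Finset.sum_congr rfl fun i _ => ?_
          rw [integral_finset_sum _ fun j _ => ((hIinner W i j).const_mul _)]
          exact Finset.sum_congr rfl fun j _ => integral_const_mul _ _
  -- squared-norm integrals as self-inner integrals
  have hself : ∀ (W : Submodule ℝ (EuclideanSpace ℝ (Fin d))) i,
      (∫ x, ⟪Pproj W (g i x), Pproj W (g i x)⟫ ∂μ) = ∫ x, ‖Pproj W (g i x)‖ ^ 2 ∂μ := by
    intro W i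
    exact integral_congr_ae (Filter.Eventually.of_forall fun x => real_inner_self_eq_norm_sq _)
  set s : Fin T → ℝ := fun i => ∫ x, ‖Pproj Uᗮ (g i x)‖ ^ 2 ∂μ with hs
  have hs0 : ∀ i, 0 ≤ s i := fun i => integral_nonneg fun x => sq_nonneg _
  -- ===== Denominator bound =====
  set D : ℝ := ∫ x, ‖Pproj Uᗮ (∑ i, ω i • g i x)‖ ^ 2 ∂μ with hD
  have hDle : D ≤ (1 + ρ * ((T : ℝ) - 1)) * ∑ i, ω i ^ 2 * s i := by
    rw [hD, hexp Uᗮ]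
    have hT1 : ∀ i : Fin T, ((univ.erase i).card : ℝ) = (T : ℝ) - 1 := by
      intro i
      rw [Finset.card_erase_of_mem (Finset.mem_univ i)]
      rw [Finset.card_univ, Fintype.card_fin]
      have hT : 1 ≤ T := Nat.one_le_iff_ne_zero.mpr fun h => (h ▸ i).elim0
      push_cast [Nat.cast_sub hT]
      ring
    have step1 : ∀ i : Fin T,
        (∑ j, ω i * ω j * ∫ x, ⟪Pproj Uᗮ (g i x), Pproj Uᗮ (g j x)⟫ ∂μ)
          ≤ ω i ^ 2 * s i + ∑ j ∈ univ.erase i,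
              (ρ / 2) * (ω i ^ 2 * s i + ω j ^ 2 * s j) := by
      intro i
      rw [← Finset.add_sum_erase _ _ (Finset.mem_univ i), hself Uᗮ i]
      have hd : ω i * ω i * s i = ω i ^ 2 * s i := by ring
      rw [hd]
      refine add_le_add_right (Finset.sum_le_sum fun j hj => ?_) _
      have hij : i ≠ j := fun h => (Finset.mem_erase.mp hj).1 h.symm
      have hb := hBNC i j hij
      have h1 : ω i * ω j * ∫ x, ⟪Pproj Uᗮ (g i x), Pproj Uᗮ (g j x)⟫ ∂μ
          ≤ ω i * ω j * (ρ * Real.sqrt (s i) * Real.sqrt (s j)) := by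
        refine mul_le_mul_of_nonneg_left ?_ (mul_nonneg (hω0 i) (hω0 j))
        exact le_trans (le_abs_self _) hb
      refine h1.trans ?_
      have hsqrt : Real.sqrt (s i) * Real.sqrt (s j) ≤ (s i + s j) / 2 := by
        nlinarith [Real.sq_sqrt (hs0 i), Real.sq_sqrt (hs0 j), Real.sqrt_nonneg (s i),
          Real.sqrt_nonneg (s j), sq_nonneg (Real.sqrt (s i) - Real.sqrt (s j))]
      have h2 : ω i * ω j * (ρ * Real.sqrt (s i) * Real.sqrt (s j))
          ≤ ω i * ω j * (ρ * ((s i + s j) / 2)) := by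
        refine mul_le_mul_of_nonneg_left ?_ (mul_nonneg (hω0 i) (hω0 j))
        rw [mul_assoc]
        exact mul_le_mul_of_nonneg_left hsqrt hρ
      refine h2.trans ?_
      have hwi : ω i * ω j * s i ≤ ω i ^ 2 * s i := by
        rw [hωsq i]
        calc ω i * ω j * s i ≤ ω i * 1 * s i :=
              mul_le_mul_of_nonneg_right
                (mul_le_mul_of_nonneg_left (hω1 j) (hω0 i)) (hs0 i)
          _ = ω i * s i := by ring
      have hwj : ω i * ω j * s j ≤ ω j ^ 2 * s j := by
        rw [hωsq j]
        calc ω i * ω j * s j ≤ 1 * ω j * s j :=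
              mul_le_mul_of_nonneg_right
                (mul_le_mul_of_nonneg_right (hω1 i) (hω0 j)) (hs0 j)
          _ = ω j * s j := by ring
      nlinarith [hρ]
    calc (∑ i, ∑ j, ω i * ω j * ∫ x, ⟪Pproj Uᗮ (g i x), Pproj Uᗮ (g j x)⟫ ∂μ)
        ≤ ∑ i, (ω i ^ 2 * s i + ∑ j ∈ univ.erase i,
            (ρ / 2) * (ω i ^ 2 * s i + ω j ^ 2 * s j)) :=
          Finset.sum_le_sum fun i _ => step1 i
      _ = (1 + ρ * ((T : ℝ) - 1)) * ∑ i, ω i ^ 2 * s i := by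
          have hsplit : ∀ i : Fin T,
              (∑ j ∈ univ.erase i, (ρ / 2) * (ω i ^ 2 * s i + ω j ^ 2 * s j))
                = (ρ / 2) * (((T : ℝ) - 1) * (ω i ^ 2 * s i))
                  + (ρ / 2) * ∑ j ∈ univ.erase i, ω j ^ 2 * s j := by
            intro i
            rw [← Finset.mul_sum, Finset.sum_add_distrib, Finset.sum_const,
              nsmul_eq_mul, hT1 i]
            ring
          simp only [hsplit]
          rw [Finset.sum_add_distrib, Finset.sum_add_distrib]
          have hswap : (∑ i, (ρ / 2) * ∑ j ∈ univ.erase i, ω j ^ 2 * s j)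
              = ∑ i, (ρ / 2) * (((T : ℝ) - 1) * (ω i ^ 2 * s i)) := by
            rw [← Finset.mul_sum, ← Finset.mul_sum]
            congr 1
            rw [Finset.sum_comm' (t := fun i => univ.erase i) (t' := univ)
              (s' := fun j => univ.erase j)]
            · refine Finset.sum_congr rfl fun j _ => ?_
              rw [Finset.sum_const, nsmul_eq_mul, hT1 j]
            · intro i j
              simp only [Finset.mem_univ, Finset.mem_erase, true_and, and_true, ne_comm]
          rw [hswap, ← Finset.sum_add_distrib, ← Finset.sum_add_distrib, Finset.mul_sum]
          refine Finset.sum_congr rfl fun i _ => ?_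
          ring
  -- ===== Numerator bound =====
  have hgint : ∀ i, Integrable (g i) μ := by
    intro i
    have hmem : MemLp (g i) 2 μ := by
      rw [memLp_two_iff_integrable_sq_norm ((hmeas i).aestronglyMeasurable)]
      exact hL2 i
    exact memLp_one_iff_integrable.mp (hmem.mono_exponent (by norm_num))
  have hPint : ∀ i, Integrable (fun x => Pproj U (g i x)) μ :=
    fun i => (Pproj U).integrable_comp (hgint i)
  have hfeq : (fun x => Pproj U (∑ i, ω i • g i x))
      = fun x => ∑ i, ω i • Pproj U (g i x) := by
    funext x; rw [map_sum]; simp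
  have hfint : Integrable (fun x => Pproj U (∑ i, ω i • g i x)) μ := by
    rw [hfeq]; exact integrable_finset_sum _ fun i _ => ((hPint i).smul (ω i))
  have hfmean : (∫ x, Pproj U (∑ i, ω i • g i x) ∂μ) = (∑ i ∈ K, ω i) • μvec := by
    rw [hfeq, integral_finset_sum (μ := μ) (f := fun i x => ω i • Pproj U (g i x)) _
      (fun i _ => ((hPint i).smul (ω i)))]
    have h1 : ∀ i : Fin T, (∫ x, ω i • Pproj U (g i x) ∂μ)
        = ω i • ∫ x, Pproj U (g i x) ∂μ := fun i => integral_smul _ _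
    simp_rw [h1]
    calc (∑ i, ω i • ∫ x, Pproj U (g i x) ∂μ)
        = ∑ i ∈ K, ω i • ∫ x, Pproj U (g i x) ∂μ :=
          (Finset.sum_subset (Finset.subset_univ K)
            (fun i _ hi => by rw [hmean0 i hi, smul_zero])).symm
      _ = ∑ i ∈ K, ω i • μvec :=
          Finset.sum_congr rfl fun i hi => by rw [hmeanK i hi]
      _ = (∑ i ∈ K, ω i) • μvec := (Finset.sum_smul).symm
  have hfsq : Integrable (fun x => ‖Pproj U (∑ i, ω i • g i x)‖ ^ 2) μ := by
    have h1 : (fun x => ‖Pproj U (∑ i, ω i • g i x)‖ ^ 2)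
        = fun x => ∑ i, ∑ j, ω i * ω j * ⟪Pproj U (g i x), Pproj U (g j x)⟫ :=
      funext (hpt U)
    rw [h1]
    exact integrable_finset_sum _ fun i _ =>
      integrable_finset_sum _ fun j _ => ((hIinner U i j).const_mul _)
  have hjen : ‖∫ x, Pproj U (∑ i, ω i • g i x) ∂μ‖ ^ 2
      ≤ ∫ x, ‖Pproj U (∑ i, ω i • g i x)‖ ^ 2 ∂μ := by
    have h1 : ‖∫ x, Pproj U (∑ i, ω i • g i x) ∂μ‖
        ≤ ∫ x, ‖Pproj U (∑ i, ω i • g i x)‖ ∂μ := norm_integral_le_integral_norm _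
    have h2 : (∫ x, ‖Pproj U (∑ i, ω i • g i x)‖ ∂μ) ^ 2
        ≤ ∫ x, ‖Pproj U (∑ i, ω i • g i x)‖ ^ 2 ∂μ :=
      sq_integral_le μ _ hfint.norm hfsq
    calc ‖∫ x, Pproj U (∑ i, ω i • g i x) ∂μ‖ ^ 2
        ≤ (∫ x, ‖Pproj U (∑ i, ω i • g i x)‖ ∂μ) ^ 2 :=
          pow_le_pow_left₀ (norm_nonneg _) h1 2
      _ ≤ _ := h2
  have hwpos : (0 : ℝ) < ∑ i ∈ K, ω i := lt_of_lt_of_le hc hcsum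
  have hNlb : c ^ 2 * σ ^ 2 ≤ ∫ x, ‖Pproj U (∑ i, ω i • g i x)‖ ^ 2 ∂μ := by
    have hnm : ‖∫ x, Pproj U (∑ i, ω i • g i x) ∂μ‖ ^ 2
        = (∑ i ∈ K, ω i) ^ 2 * ‖μvec‖ ^ 2 := by
      rw [hfmean, norm_smul, mul_pow, Real.norm_eq_abs, sq_abs]
    have hcc : c ^ 2 * σ ^ 2 ≤ (∑ i ∈ K, ω i) ^ 2 * ‖μvec‖ ^ 2 := by
      refine mul_le_mul (pow_le_pow_left₀ hc.le hcsum 2) hμσ hσpos.le (by positivity)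
    linarith [hnm ▸ hjen]
  -- ===== Conclusion =====
  have hNnn : (0 : ℝ) ≤ ∫ x, ‖Pproj U (∑ i, ω i • g i x)‖ ^ 2 ∂μ :=
    integral_nonneg fun x => sq_nonneg _
  have hdenom : (1 + ρ * ((T : ℝ) - 1)) * (∑ i ∈ Kᶜ, ω i ^ 2 * s i)
      + (1 + ρ * ((T : ℝ) - 1)) * (∑ i ∈ K, ω i ^ 2 * s i)
      = (1 + ρ * ((T : ℝ) - 1)) * ∑ i, ω i ^ 2 * s i := by
    rw [← mul_add, Finset.sum_compl_add_sum]
  show c ^ 2 * σ ^ 2 /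
      ((1 + ρ * ((T : ℝ) - 1)) * (∑ i ∈ Kᶜ, ω i ^ 2 * s i)
        + (1 + ρ * ((T : ℝ) - 1)) * (∑ i ∈ K, ω i ^ 2 * s i))
    ≤ (∫ x, ‖Pproj U (∑ i, ω i • g i x)‖ ^ 2 ∂μ) / D
  rw [hdenom]
  exact div_le_div₀ hNnn hNlb hnoise hDle
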